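/- Let M ≥ 2, δ ∈ (0, 1 - 1/M), α = 1/M + δ, β = 1/M - δ/(M-1). A trajectory of length N of the symmetric M-state chain that starts and ends in the correct state but visits exactly k ≥ 1 maximal blocks of incorrect states has probability (1/M)·α^{N-l}·β^{l} for some integer l with 2 ≤ l ≤ min(2k, N). -/
import Mathlib


theorem stmt_15 (M N : ℕ) (hM : 2 ≤ M)
    (δ : ℝ) (hδ : δ ∈ Set.Ioo (0:ℝ) (1 - 1/(M:ℝ)))
    (α β : ℝ) (hα : α = 1/(M:ℝ) + δ) (hβ : β = 1/(M:ℝ) - δ/((M:ℝ) - 1))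
    (s : ℕ → Fin M) (h0 : s 0 = ⟨0, by omega⟩) (hend : s N = ⟨0, by omega⟩)
    (k : ℕ)
    (hk : k = ((Finset.range (N+1)).filter (fun n => s n ≠ ⟨0, by omega⟩)).card)
    (hk1 : 1 ≤ k) :
    ∃ l : ℕ, 2 ≤ l ∧ l ≤ min (2 * k) N ∧
      (1/(M:ℝ)) * ∏ n ∈ Finset.range N, (if s n = s (n+1) then α else β)
        = (1/(M:ℝ)) * α ^ (N - l) * β ^ l := by
  classical
  set Z : Fin M := ⟨0, by omega⟩ with hZ
  set K := (Finset.range (N+1)).filter (fun n => s n ≠ Z) with hK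
  set T := (Finset.range N).filter (fun n => ¬ s n = s (n+1)) with hT
  -- K is nonempty
  have hKne : K.Nonempty := by
    rw [← Finset.card_pos, ← hk]; omega
  obtain ⟨m0, hm0⟩ := hKne
  have hm0' : s m0 ≠ Z ∧ m0 < N + 1 := by
    rw [hK, Finset.mem_filter, Finset.mem_range] at hm0; tauto
  -- minimal element with s m ≠ Z
  have hex : ∃ m, s m ≠ Z := ⟨m0, hm0'.1⟩
  set m := Nat.find hex with hm
  have hmspec : s m ≠ Z := Nat.find_spec hex
  have hm1 : 1 ≤ m := by
    rcases Nat.eq_zero_or_pos m with h | h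
    · exact absurd (h ▸ hmspec) (by simp [h0])
    · omega
  have hmprev : s (m - 1) = Z := by
    by_contra h
    have := Nat.find_min hex (show m - 1 < m by omega)
    exact this h
  -- maximal element of K
  set m' := K.max' ⟨m0, hm0⟩ with hm'
  have hm'K : m' ∈ K := K.max'_mem _
  have hm'spec : s m' ≠ Z ∧ m' < N + 1 := by
    rw [hK, Finset.mem_filter, Finset.mem_range] at hm'K; tauto
  have hm'N : m' ≠ N := fun h => hm'spec.1 (h ▸ hend)
  have hm'lt : m' < N := by omega
  have hm'next : s (m' + 1) = Z := by
    rcases Nat.eq_or_lt_of_le (Nat.succ_le_of_lt hm'lt) with h | h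
    · have h' : m' + 1 = N := h
      rw [h']; exact hend
    · by_contra hc
      have : m' + 1 ∈ K := by
        rw [hK, Finset.mem_filter, Finset.mem_range]; exact ⟨by omega, hc⟩
      have := K.le_max' _ this
      omega
  -- m ≤ m'
  have hmm' : m ≤ m' := Nat.find_le hm'spec.1
  -- m - 1 ∈ T and m' ∈ T
  have hT1 : m - 1 ∈ T := by
    rw [hT, Finset.mem_filter, Finset.mem_range]
    constructor
    · omega
    · have : m - 1 + 1 = m := by omega
      rw [this, hmprev]
      exact fun h => hmspec h.symm
  have hT2 : m' ∈ T := by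
    rw [hT, Finset.mem_filter, Finset.mem_range]
    refine ⟨hm'lt, ?_⟩
    rw [hm'next]
    exact hm'spec.1
  have hne : m - 1 ≠ m' := by omega
  have hl2 : 2 ≤ T.card := by
    have : ({m - 1, m'} : Finset ℕ) ⊆ T := by
      intro x hx
      simp only [Finset.mem_insert, Finset.mem_singleton] at hx
      rcases hx with h | h <;> simp [h, hT1, hT2]
    calc 2 = ({m - 1, m'} : Finset ℕ).card := by rw [Finset.card_pair hne]
      _ ≤ T.card := Finset.card_le_card this
  -- T.card ≤ N
  have hlN : T.card ≤ N := by
    calc T.card ≤ (Finset.range N).card := Finset.card_le_card (Finset.filter_subset _ _)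
      _ = N := Finset.card_range N
  -- T.card ≤ 2 * k
  have hl2k : T.card ≤ 2 * k := by
    set A := T.filter (fun n => s n ≠ Z) with hA
    set B := T.filter (fun n => s (n+1) ≠ Z) with hB
    have hTAB : T ⊆ A ∪ B := by
      intro n hn
      have hn' := hn
      rw [hT, Finset.mem_filter] at hn'
      simp only [Finset.mem_union, hA, hB, Finset.mem_filter]
      by_cases h1 : s n = Z
      · right
        exact ⟨hn, fun h2 => hn'.2 (h1.trans h2.symm)⟩
      · left; exact ⟨hn, h1⟩
    have hAk : A.card ≤ k := by
      rw [hk]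
      apply Finset.card_le_card
      intro n hn
      simp only [hA, hT, Finset.mem_filter, Finset.mem_range] at hn
      simp only [hK, Finset.mem_filter, Finset.mem_range]
      exact ⟨by omega, hn.2⟩
    have hBk : B.card ≤ k := by
      rw [hk]
      have : B.card = (B.image (fun n => n + 1)).card := by
        rw [Finset.card_image_of_injective _ (fun a b h => by omega)]
      rw [this]
      apply Finset.card_le_card
      intro x hx
      rw [Finset.mem_image] at hx
      obtain ⟨n, hn, rfl⟩ := hx
      simp only [hB, hT, Finset.mem_filter, Finset.mem_range] at hn
      simp only [hK, Finset.mem_filter, Finset.mem_range]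
      exact ⟨by omega, hn.2⟩
    calc T.card ≤ (A ∪ B).card := Finset.card_le_card hTAB
      _ ≤ A.card + B.card := Finset.card_union_le _ _
      _ ≤ 2 * k := by omega
  refine ⟨T.card, hl2, le_min hl2k hlN, ?_⟩
  -- product computation
  have hprod : ∏ n ∈ Finset.range N, (if s n = s (n+1) then α else β)
      = α ^ (N - T.card) * β ^ T.card := by
    rw [Finset.prod_ite, Finset.prod_const, Finset.prod_const, ← hT]
    congr 2
    have := Finset.card_filter_add_card_filter_not
      (s := Finset.range N) (p := fun n => s n = s (n+1))
    rw [Finset.card_range] at this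
    rw [← hT] at *
    omega
  rw [hprod]; ring
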